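/- Let G = K₈ + Q, where Q is the complement of the circulant graph on Z₁₃ with connection set {±1, ±5} and + denotes the graph join. Suppose the edges of G are 2-colored blue and red with no blue triangle and no red 5-clique. Then for every vertex v of the K₈ part, cl(G[A₁(v)]) + cl(G[A₂(v)]) ≤ 5, where A_i(v) is the set of vertices of Q joined to v by an edge of color i. -/

import Mathlib

open SimpleGraph

/-- The join of two graphs: all vertices of `G₁` are joined to all of `G₂`. -/
def graphJoin {V W : Type*} (G₁ : SimpleGraph V) (G₂ : SimpleGraph W) :
    SimpleGraph (V ⊕ W) where
  Adj x y :=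
    match x, y with
    | Sum.inl a, Sum.inl b => G₁.Adj a b
    | Sum.inr a, Sum.inr b => G₂.Adj a b
    | Sum.inl _, Sum.inr _ => True
    | Sum.inr _, Sum.inl _ => True
  symm := ⟨fun x y => by cases x <;> cases y <;> simp [SimpleGraph.adj_comm]⟩
  loopless := ⟨fun x => by cases x <;> simp⟩

/-- The Greenwood–Gleason graph `Q`: the complement of the circulant graph on
`ℤ/13` with connection set `{±1, ±5}`. -/
def Q : SimpleGraph (ZMod 13) :=
  (SimpleGraph.circulantGraph {1, -1, 5, -5})ᶜ

/-- `G = K₈ + Q`. -/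
def G : SimpleGraph (Fin 8 ⊕ ZMod 13) :=
  graphJoin (⊤ : SimpleGraph (Fin 8)) Q

/-- A clique of `H` all of whose edges receive color `i` (blue = 0, red = 1). -/
def MonoClique {V : Type*} (H : SimpleGraph V) (c : Sym2 V → Fin 2) (i : Fin 2)
    (n : ℕ) (s : Finset V) : Prop :=
  H.IsNClique n s ∧ ∀ x ∈ s, ∀ y ∈ s, x ≠ y → c s(x, y) = i

/-- `A_i(v)`: vertices of the `Q`-part joined to `inl v` by an edge of color `i`. -/
def A (c : Sym2 (Fin 8 ⊕ ZMod 13) → Fin 2) (v : Fin 8) (i : Fin 2) :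
    Set (Fin 8 ⊕ ZMod 13) :=
  {w | ∃ x : ZMod 13, w = Sum.inr x ∧ c s(Sum.inl v, w) = i}

variable {V : Type*} [DecidableEq V]

lemma exists_three (B : Finset V) (h : 3 ≤ B.card) :
    ∃ x ∈ B, ∃ y ∈ B, ∃ z ∈ B, x ≠ y ∧ x ≠ z ∧ y ≠ z := by
  obtain ⟨t, hts, ht3⟩ := Finset.exists_subset_card_eq h
  rw [Finset.card_eq_three] at ht3
  obtain ⟨x, y, z, hxy, hxz, hyz, rfl⟩ := ht3
  exact ⟨x, hts (by simp), y, hts (by simp), z, hts (by simp), hxy, hxz, hyz⟩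

lemma exists_four (B : Finset V) (h : 4 ≤ B.card) :
    ∃ w ∈ B, ∃ x ∈ B, ∃ y ∈ B, ∃ z ∈ B,
      w ≠ x ∧ w ≠ y ∧ w ≠ z ∧ x ≠ y ∧ x ≠ z ∧ y ≠ z := by
  obtain ⟨w, hw⟩ := Finset.card_pos.mp (show 0 < B.card by omega)
  obtain ⟨x, hx, y, hy, z, hz, hxy, hxz, hyz⟩ :=
    exists_three (B.erase w) (by rw [Finset.card_erase_of_mem hw]; omega)
  refine ⟨w, hw, x, Finset.mem_of_mem_erase hx, y, Finset.mem_of_mem_erase hy,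
    z, Finset.mem_of_mem_erase hz, ?_, ?_, ?_, hxy, hxz, hyz⟩ <;>
    [exact fun h => (Finset.mem_erase.mp hx).1 h.symm;
     exact fun h => (Finset.mem_erase.mp hy).1 h.symm;
     exact fun h => (Finset.mem_erase.mp hz).1 h.symm]

lemma fin2_cases (i : Fin 2) : i = 0 ∨ i = 1 := by omega

/-- R(3,3) ≤ 6 : in a 6-set with no blue triangle there is a red triangle. -/
lemma R33 (c : V → V → Fin 2) (hsym : ∀ x y, c x y = c y x) (U : Finset V)
    (h : 6 ≤ U.card)
    (hb : ¬ ∃ x ∈ U, ∃ y ∈ U, ∃ z ∈ U, x ≠ y ∧ x ≠ z ∧ y ≠ z ∧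
      c x y = 0 ∧ c x z = 0 ∧ c y z = 0) :
    ∃ x ∈ U, ∃ y ∈ U, ∃ z ∈ U, x ≠ y ∧ x ≠ z ∧ y ≠ z ∧
      c x y = 1 ∧ c x z = 1 ∧ c y z = 1 := by
  obtain ⟨u, hu⟩ := Finset.card_pos.mp (show 0 < U.card by omega)
  set U' := U.erase u with hU'
  have hU'c : 5 ≤ U'.card := by rw [hU', Finset.card_erase_of_mem hu]; omega
  set B := U'.filter (fun w => c u w = 0) with hB
  set R := U'.filter (fun w => c u w = 1) with hR
  have hsplit : B.card + R.card = U'.card := by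
    rw [hB, hR]
    rw [show (U'.filter (fun w => c u w = 1)) = U'.filter (fun w => ¬ c u w = 0) by
      apply Finset.filter_congr; intro w _; rcases fin2_cases (c u w) with h | h <;> simp [h]]
    exact Finset.card_filter_add_card_filter_not _
  have hmemB : ∀ w ∈ B, w ∈ U ∧ w ≠ u ∧ c u w = 0 := by
    intro w hw
    rw [hB, Finset.mem_filter, hU', Finset.mem_erase] at hw
    exact ⟨hw.1.2, hw.1.1, hw.2⟩
  have hmemR : ∀ w ∈ R, w ∈ U ∧ w ≠ u ∧ c u w = 1 := by
    intro w hw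
    rw [hR, Finset.mem_filter, hU', Finset.mem_erase] at hw
    exact ⟨hw.1.2, hw.1.1, hw.2⟩
  rcases le_or_gt 3 B.card with hc | hc
  · obtain ⟨x, hx, y, hy, z, hz, hxy, hxz, hyz⟩ := exists_three B hc
    obtain ⟨hxU, hxu, hcx⟩ := hmemB x hx
    obtain ⟨hyU, hyu, hcy⟩ := hmemB y hy
    obtain ⟨hzU, hzu, hcz⟩ := hmemB z hz
    -- all pairs among x,y,z must be red
    have pxy : c x y = 1 := by
      rcases fin2_cases (c x y) with h0 | h1
      · exact absurd ⟨u, hu, x, hxU, y, hyU, Ne.symm hxu, Ne.symm hyu, hxy, hcx, hcy, h0⟩ hb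
      · exact h1
    have pxz : c x z = 1 := by
      rcases fin2_cases (c x z) with h0 | h1
      · exact absurd ⟨u, hu, x, hxU, z, hzU, Ne.symm hxu, Ne.symm hzu, hxz, hcx, hcz, h0⟩ hb
      · exact h1
    have pyz : c y z = 1 := by
      rcases fin2_cases (c y z) with h0 | h1
      · exact absurd ⟨u, hu, y, hyU, z, hzU, Ne.symm hyu, Ne.symm hzu, hyz, hcy, hcz, h0⟩ hb
      · exact h1
    exact ⟨x, hxU, y, hyU, z, hzU, hxy, hxz, hyz, pxy, pxz, pyz⟩
  · have hcR : 3 ≤ R.card := by omega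
    obtain ⟨x, hx, y, hy, z, hz, hxy, hxz, hyz⟩ := exists_three R hcR
    obtain ⟨hxU, hxu, hcx⟩ := hmemR x hx
    obtain ⟨hyU, hyu, hcy⟩ := hmemR y hy
    obtain ⟨hzU, hzu, hcz⟩ := hmemR z hz
    rcases fin2_cases (c x y) with h0 | h1
    · rcases fin2_cases (c x z) with g0 | g1
      · rcases fin2_cases (c y z) with f0 | f1
        · exact absurd ⟨x, hxU, y, hyU, z, hzU, hxy, hxz, hyz, h0, g0, f0⟩ hb
        · exact ⟨u, hu, y, hyU, z, hzU, Ne.symm hyu, Ne.symm hzu, hyz, hcy, hcz, f1⟩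
      · exact ⟨u, hu, x, hxU, z, hzU, Ne.symm hxu, Ne.symm hzu, hxz, hcx, hcz, g1⟩
    · exact ⟨u, hu, x, hxU, y, hyU, Ne.symm hxu, Ne.symm hyu, hxy, hcx, hcy, h1⟩

/-- R(3,4) ≤ 9 : a 9-set with no blue triangle and no red 4-clique is impossible. -/
lemma R34 (c : V → V → Fin 2) (hsym : ∀ x y, c x y = c y x)
    (r : V → ℕ) (hr : Function.Injective r)
    (U : Finset V) (h : 9 ≤ U.card)
    (hb : ¬ ∃ x ∈ U, ∃ y ∈ U, ∃ z ∈ U, x ≠ y ∧ x ≠ z ∧ y ≠ z ∧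
      c x y = 0 ∧ c x z = 0 ∧ c y z = 0)
    (hred : ¬ ∃ w ∈ U, ∃ x ∈ U, ∃ y ∈ U, ∃ z ∈ U,
      w ≠ x ∧ w ≠ y ∧ w ≠ z ∧ x ≠ y ∧ x ≠ z ∧ y ≠ z ∧
      c w x = 1 ∧ c w y = 1 ∧ c w z = 1 ∧ c x y = 1 ∧ c x z = 1 ∧ c y z = 1) :
    False := by
  obtain ⟨T, hTU, hT9⟩ := Finset.exists_subset_card_eq h
  have hbT : ¬ ∃ x ∈ T, ∃ y ∈ T, ∃ z ∈ T, x ≠ y ∧ x ≠ z ∧ y ≠ z ∧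
      c x y = 0 ∧ c x z = 0 ∧ c y z = 0 := by
    rintro ⟨x, hx, y, hy, z, hz, rest⟩
    exact hb ⟨x, hTU hx, y, hTU hy, z, hTU hz, rest⟩
  -- each vertex of T has blue-degree exactly 3 inside T
  have hdeg : ∀ u ∈ T, ((T.erase u).filter (fun w => c u w = 0)).card = 3 := by
    intro u hu
    set B := (T.erase u).filter (fun w => c u w = 0) with hB
    set R := (T.erase u).filter (fun w => c u w = 1) with hR
    have hsplit : B.card + R.card = 8 := by
      rw [hB, hR]
      rw [show ((T.erase u).filter (fun w => c u w = 1))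
            = (T.erase u).filter (fun w => ¬ c u w = 0) by
        apply Finset.filter_congr; intro w _
        rcases fin2_cases (c u w) with h | h <;> simp [h]]
      rw [Finset.card_filter_add_card_filter_not, Finset.card_erase_of_mem hu, hT9]
    have hmemB : ∀ w ∈ B, w ∈ T ∧ w ≠ u ∧ c u w = 0 := by
      intro w hw
      rw [hB, Finset.mem_filter, Finset.mem_erase] at hw
      exact ⟨hw.1.2, hw.1.1, hw.2⟩
    have hmemR : ∀ w ∈ R, w ∈ T ∧ w ≠ u ∧ c u w = 1 := by
      intro w hw
      rw [hR, Finset.mem_filter, Finset.mem_erase] at hw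
      exact ⟨hw.1.2, hw.1.1, hw.2⟩
    have hBle : B.card ≤ 3 := by
      by_contra hc
      obtain ⟨w, hw, x, hx, y, hy, z, hz, hwx, hwy, hwz, hxy, hxz, hyz⟩ :=
        exists_four B (by omega)
      obtain ⟨hwT, hwu, hcw⟩ := hmemB w hw
      obtain ⟨hxT, hxu, hcx⟩ := hmemB x hx
      obtain ⟨hyT, hyu, hcy⟩ := hmemB y hy
      obtain ⟨hzT, hzu, hcz⟩ := hmemB z hz
      have red : ∀ a ∈ B, ∀ b ∈ B, a ≠ b → c a b = 1 := by
        intro a ha b hb' hab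
        obtain ⟨haT, hau, hca⟩ := hmemB a ha
        obtain ⟨hbT2, hbu, hcb⟩ := hmemB b hb'
        rcases fin2_cases (c a b) with h0 | h1
        · exact absurd ⟨u, hu, a, haT, b, hbT2, Ne.symm hau, Ne.symm hbu, hab, hca, hcb, h0⟩ hbT
        · exact h1
      exact hred ⟨w, hTU hwT, x, hTU hxT, y, hTU hyT, z, hTU hzT,
        hwx, hwy, hwz, hxy, hxz, hyz,
        red w hw x hx hwx, red w hw y hy hwy, red w hw z hz hwz,
        red x hx y hy hxy, red x hx z hz hxz, red y hy z hz hyz⟩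
    have hRle : R.card ≤ 5 := by
      by_contra hc
      have hbR : ¬ ∃ x ∈ R, ∃ y ∈ R, ∃ z ∈ R, x ≠ y ∧ x ≠ z ∧ y ≠ z ∧
          c x y = 0 ∧ c x z = 0 ∧ c y z = 0 := by
        rintro ⟨x, hx, y, hy, z, hz, rest⟩
        exact hbT ⟨x, (hmemR x hx).1, y, (hmemR y hy).1, z, (hmemR z hz).1, rest⟩
      obtain ⟨x, hx, y, hy, z, hz, hxy, hxz, hyz, pxy, pxz, pyz⟩ :=
        R33 c hsym R (by omega) hbR
      obtain ⟨hxT, hxu, hcx⟩ := hmemR x hx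
      obtain ⟨hyT, hyu, hcy⟩ := hmemR y hy
      obtain ⟨hzT, hzu, hcz⟩ := hmemR z hz
      exact hred ⟨u, hTU hu, x, hTU hxT, y, hTU hyT, z, hTU hzT,
        Ne.symm hxu, Ne.symm hyu, Ne.symm hzu, hxy, hxz, hyz,
        hcx, hcy, hcz, pxy, pxz, pyz⟩
    omega
  -- parity: the number of ordered blue pairs in T is 27, but it must be even
  set P := (T ×ˢ T).filter (fun p => p.1 ≠ p.2 ∧ c p.1 p.2 = 0) with hP
  have hPcard : P.card = 27 := by
    rw [hP, Finset.card_eq_sum_card_fiberwise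
      (f := Prod.fst) (t := T) (fun p hp => (Finset.mem_product.mp (Finset.mem_filter.mp hp).1).1)]
    have : ∀ u ∈ T, (((T ×ˢ T).filter (fun p => p.1 ≠ p.2 ∧ c p.1 p.2 = 0)).filter
        (fun p => p.1 = u)).card = 3 := by
      intro u hu
      rw [← hdeg u hu]
      apply Finset.card_bij (fun p _ => p.2)
      · rintro ⟨a, b⟩ hp
        simp only [Finset.mem_filter, Finset.mem_product] at hp
        obtain ⟨⟨⟨haT, hbT⟩, hab, hc0⟩, rfl⟩ := hp
        exact Finset.mem_filter.mpr ⟨Finset.mem_erase.mpr ⟨Ne.symm hab, hbT⟩, hc0⟩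
      · rintro ⟨a, b⟩ hp ⟨a', b'⟩ hp' hbb
        simp only [Finset.mem_filter, Finset.mem_product] at hp hp'
        simp only at hbb
        rw [Prod.mk.injEq]
        exact ⟨hp.2.trans hp'.2.symm, hbb⟩
      · intro b hb
        rw [Finset.mem_filter, Finset.mem_erase] at hb
        exact ⟨(u, b), Finset.mem_filter.mpr ⟨Finset.mem_filter.mpr
          ⟨Finset.mem_product.mpr ⟨hu, hb.1.2⟩, Ne.symm hb.1.1, hb.2⟩, rfl⟩, rfl⟩
    rw [Finset.sum_congr rfl this, Finset.sum_const, hT9]; norm_num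
  have hPeven : P.card % 2 = 0 := by
    have hsplit := Finset.card_filter_add_card_filter_not
      (s := P) (p := fun p => r p.1 < r p.2)
    have hbij : (P.filter (fun p => r p.1 < r p.2)).card
        = (P.filter (fun p => ¬ r p.1 < r p.2)).card := by
      apply Finset.card_bij (fun p _ => (p.2, p.1))
      · rintro ⟨a, b⟩ hp
        simp only [Finset.mem_filter, Finset.mem_product, hP] at hp ⊢
        exact ⟨⟨⟨hp.1.1.2, hp.1.1.1⟩, Ne.symm hp.1.2.1, (hsym b a).trans hp.1.2.2⟩, by omega⟩
      · rintro ⟨a, b⟩ _ ⟨a', b'⟩ _ hbb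
        simp only [Prod.mk.injEq] at hbb ⊢
        exact ⟨hbb.2, hbb.1⟩
      · rintro ⟨a, b⟩ hp
        simp only [Finset.mem_filter, Finset.mem_product, hP] at hp
        refine ⟨(b, a), ?_, rfl⟩
        simp only [Finset.mem_filter, Finset.mem_product, hP]
        have : r a ≠ r b := fun hh => hp.1.2.1 (hr hh)
        exact ⟨⟨⟨hp.1.1.2, hp.1.1.1⟩, Ne.symm hp.1.2.1, (hsym b a).trans hp.1.2.2⟩, by omega⟩
    omega
  omega

section Helpers

variable {V' : Type*} [DecidableEq V']

lemma mono3 (H : SimpleGraph V') (c : Sym2 V' → Fin 2) (i : Fin 2) {x y z : V'}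
    (hxy : H.Adj x y) (hxz : H.Adj x z) (hyz : H.Adj y z)
    (cxy : c s(x, y) = i) (cxz : c s(x, z) = i) (cyz : c s(y, z) = i) :
    MonoClique H c i 3 {x, y, z} := by
  refine ⟨SimpleGraph.is3Clique_triple_iff.mpr ⟨hxy, hxz, hyz⟩, ?_⟩
  intro a ha b hb hab
  simp only [Finset.mem_insert, Finset.mem_singleton] at ha hb
  rcases ha with rfl | rfl | rfl <;> rcases hb with rfl | rfl | rfl <;>
    first
      | exact absurd rfl hab
      | assumption
      | (rw [Sym2.eq_swap]; assumption)

omit [DecidableEq V'] in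
lemma shrink (H : SimpleGraph V') (c : Sym2 V' → Fin 2) (i : Fin 2) (n : ℕ)
    (W : Finset V') (hcl : H.IsClique ↑W)
    (hcol : ∀ x ∈ W, ∀ y ∈ W, x ≠ y → c s(x, y) = i) (hn : n ≤ W.card) :
    ∃ s, MonoClique H c i n s := by
  obtain ⟨T, hTW, hTn⟩ := Finset.exists_subset_card_eq hn
  exact ⟨T, ⟨hcl.subset (Finset.coe_subset.mpr hTW), hTn⟩,
    fun x hx y hy hxy => hcol x (hTW hx) y (hTW hy) hxy⟩

end Helpers

/-- Injection of the vertex set of `G` into `ℕ`. -/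
def rk : (Fin 8 ⊕ ZMod 13) → ℕ := Sum.elim Fin.val (fun z => 8 + z.val)

lemma rk_inj : Function.Injective rk := by
  rintro (a | a) (b | b) h <;> simp only [rk, Sum.elim_inl, Sum.elim_inr] at h
  · exact congrArg Sum.inl (Fin.ext h)
  · exact absurd h (by omega)
  · exact absurd h (by omega)
  · exact congrArg Sum.inr (ZMod.val_injective _ (by omega))
theorem stmt11 (c : Sym2 (Fin 8 ⊕ ZMod 13) → Fin 2)
    (hblue : ¬ ∃ s, MonoClique G c 0 3 s)
    (hred : ¬ ∃ s, MonoClique G c 1 5 s) (v : Fin 8) :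
    (G.induce (A c v 0)).cliqueNum + (G.induce (A c v 1)).cliqueNum ≤ 5 := by
  classical
  haveI : Fintype ↥(A c v 0) := Fintype.ofFinite _
  haveI : Fintype ↥(A c v 1) := Fintype.ofFinite _
  set a := (G.induce (A c v 0)).cliqueNum with ha
  set b := (G.induce (A c v 1)).cliqueNum with hb
  obtain ⟨s, hs⟩ := SimpleGraph.exists_isNClique_cliqueNum (G := G.induce (A c v 0))
  obtain ⟨t, ht⟩ := SimpleGraph.exists_isNClique_cliqueNum (G := G.induce (A c v 1))
  by_contra hcon
  push_neg at hcon
  -- lift the cliques to the ambient graph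
  set s' : Finset (Fin 8 ⊕ ZMod 13) := s.map (Function.Embedding.subtype _) with hs'
  set t' : Finset (Fin 8 ⊕ ZMod 13) := t.map (Function.Embedding.subtype _) with ht'
  have hs'card : s'.card = a := by rw [hs', Finset.card_map, hs.card_eq]
  have ht'card : t'.card = b := by rw [ht', Finset.card_map, ht.card_eq]
  have hs'mem : ∀ w ∈ s', (∃ x, w = Sum.inr x) ∧ c s(Sum.inl v, w) = 0 := by
    intro w hw
    rw [hs', Finset.mem_map] at hw
    obtain ⟨⟨w, hwA⟩, _, rfl⟩ := hw
    obtain ⟨x, hx, hcx⟩ := hwA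
    exact ⟨⟨x, hx⟩, hcx⟩
  have ht'mem : ∀ w ∈ t', (∃ x, w = Sum.inr x) ∧ c s(Sum.inl v, w) = 1 := by
    intro w hw
    rw [ht', Finset.mem_map] at hw
    obtain ⟨⟨w, hwA⟩, _, rfl⟩ := hw
    obtain ⟨x, hx, hcx⟩ := hwA
    exact ⟨⟨x, hx⟩, hcx⟩
  have hs'cl : G.IsClique ↑s' := by
    intro x hx y hy hxy
    rw [Finset.mem_coe, hs', Finset.mem_map] at hx hy
    obtain ⟨x₀, hx₀, rfl⟩ := hx
    obtain ⟨y₀, hy₀, rfl⟩ := hy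
    have hne : x₀ ≠ y₀ := fun h => hxy (congrArg _ h)
    simpa using hs.isClique (Finset.mem_coe.mpr hx₀) (Finset.mem_coe.mpr hy₀)
      (Subtype.coe_ne_coe.mp hxy)
  have ht'cl : G.IsClique ↑t' := by
    intro x hx y hy hxy
    rw [Finset.mem_coe, ht', Finset.mem_map] at hx hy
    obtain ⟨x₀, hx₀, rfl⟩ := hx
    obtain ⟨y₀, hy₀, rfl⟩ := hy
    simpa using ht.isClique (Finset.mem_coe.mpr hx₀) (Finset.mem_coe.mpr hy₀)
      (Subtype.coe_ne_coe.mp hxy)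
  -- split the other 7 vertices of K₈ by the color of their edge to v
  set X : Finset (Fin 8) := Finset.univ.erase v with hX
  set B : Finset (Fin 8) := X.filter (fun u => c s(Sum.inl v, Sum.inl u) = 0) with hBdef
  set R : Finset (Fin 8) := X.filter (fun u => c s(Sum.inl v, Sum.inl u) = 1) with hRdef
  have hBR7 : B.card + R.card = 7 := by
    rw [hBdef, hRdef]
    rw [show (X.filter (fun u => c s(Sum.inl v, Sum.inl u) = 1))
          = X.filter (fun u => ¬ c s(Sum.inl v, Sum.inl u) = 0) by
      apply Finset.filter_congr; intro w _
      rcases fin2_cases (c s(Sum.inl v, Sum.inl w)) with h | h <;> simp [h]]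
    rw [Finset.card_filter_add_card_filter_not, hX,
      Finset.card_erase_of_mem (Finset.mem_univ v)]
    simp
  set inlE : Fin 8 ↪ (Fin 8 ⊕ ZMod 13) := ⟨Sum.inl, Sum.inl_injective⟩ with hinlE
  -- the blue side: W = B ∪ s'
  set W : Finset (Fin 8 ⊕ ZMod 13) := B.map inlE ∪ s' with hW
  have hWdisj : Disjoint (B.map inlE) s' := by
    rw [Finset.disjoint_left]
    intro w hw hws
    obtain ⟨u, _, rfl⟩ := Finset.mem_map.mp hw
    obtain ⟨⟨x, hx⟩, _⟩ := hs'mem _ hws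
    exact absurd hx (by simp [hinlE])
  have hWcard : W.card = B.card + a := by
    rw [hW, Finset.card_union_of_disjoint hWdisj, Finset.card_map, hs'card]
  have hWmem : ∀ w ∈ W, G.Adj (Sum.inl v) w ∧ c s(Sum.inl v, w) = 0 ∧ w ≠ Sum.inl v := by
    intro w hw
    rcases Finset.mem_union.mp hw with h | h
    · obtain ⟨u, hu, rfl⟩ := Finset.mem_map.mp h
      rw [hBdef, Finset.mem_filter, hX, Finset.mem_erase] at hu
      have hne : v ≠ u := Ne.symm hu.1.1
      exact ⟨hne, hu.2, by simp [hinlE, Ne.symm hne]⟩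
    · obtain ⟨⟨x, rfl⟩, hcx⟩ := hs'mem _ h
      exact ⟨trivial, hcx, by simp⟩
  have hWcl : G.IsClique ↑W := by
    intro p hp q hq hpq
    rcases Finset.mem_union.mp (Finset.mem_coe.mp hp) with h1 | h1 <;>
      rcases Finset.mem_union.mp (Finset.mem_coe.mp hq) with h2 | h2
    · obtain ⟨u1, _, rfl⟩ := Finset.mem_map.mp h1
      obtain ⟨u2, _, rfl⟩ := Finset.mem_map.mp h2
      exact fun h => hpq (congrArg _ (by simpa [hinlE] using h))
    · obtain ⟨u1, _, rfl⟩ := Finset.mem_map.mp h1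
      obtain ⟨⟨x, rfl⟩, _⟩ := hs'mem _ h2
      trivial
    · obtain ⟨⟨x, rfl⟩, _⟩ := hs'mem _ h1
      obtain ⟨u2, _, rfl⟩ := Finset.mem_map.mp h2
      trivial
    · exact hs'cl h1 h2 hpq
  have hWred : ∀ p ∈ W, ∀ q ∈ W, p ≠ q → c s(p, q) = 1 := by
    intro p hp q hq hpq
    rcases fin2_cases (c s(p, q)) with h0 | h1
    · obtain ⟨hap, hcp, hnp⟩ := hWmem p hp
      obtain ⟨haq, hcq, hnq⟩ := hWmem q hq
      exact absurd ⟨{Sum.inl v, p, q},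
        mono3 G c 0 hap haq (hWcl (Finset.mem_coe.mpr hp) (Finset.mem_coe.mpr hq) hpq)
          hcp hcq h0⟩ hblue
    · exact h1
  have hBa : B.card + a ≤ 4 := by
    by_contra hc
    exact hred (shrink G c 1 5 W hWcl hWred (by omega))
  -- the red side: U = R ∪ t'
  set U : Finset (Fin 8 ⊕ ZMod 13) := R.map inlE ∪ t' with hU
  have hUdisj : Disjoint (R.map inlE) t' := by
    rw [Finset.disjoint_left]
    intro w hw hws
    obtain ⟨u, _, rfl⟩ := Finset.mem_map.mp hw
    obtain ⟨⟨x, hx⟩, _⟩ := ht'mem _ hws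
    exact absurd hx (by simp [hinlE])
  have hUcard : U.card = R.card + b := by
    rw [hU, Finset.card_union_of_disjoint hUdisj, Finset.card_map, ht'card]
  have hUmem : ∀ w ∈ U, G.Adj (Sum.inl v) w ∧ c s(Sum.inl v, w) = 1 ∧ w ≠ Sum.inl v := by
    intro w hw
    rcases Finset.mem_union.mp hw with h | h
    · obtain ⟨u, hu, rfl⟩ := Finset.mem_map.mp h
      rw [hRdef, Finset.mem_filter, hX, Finset.mem_erase] at hu
      have hne : v ≠ u := Ne.symm hu.1.1
      exact ⟨hne, hu.2, by simp [hinlE, Ne.symm hne]⟩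
    · obtain ⟨⟨x, rfl⟩, hcx⟩ := ht'mem _ h
      exact ⟨trivial, hcx, by simp⟩
  have hUcl : G.IsClique ↑U := by
    intro p hp q hq hpq
    rcases Finset.mem_union.mp (Finset.mem_coe.mp hp) with h1 | h1 <;>
      rcases Finset.mem_union.mp (Finset.mem_coe.mp hq) with h2 | h2
    · obtain ⟨u1, _, rfl⟩ := Finset.mem_map.mp h1
      obtain ⟨u2, _, rfl⟩ := Finset.mem_map.mp h2
      exact fun h => hpq (congrArg _ (by simpa [hinlE] using h))
    · obtain ⟨u1, _, rfl⟩ := Finset.mem_map.mp h1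
      obtain ⟨⟨x, rfl⟩, _⟩ := ht'mem _ h2
      trivial
    · obtain ⟨⟨x, rfl⟩, _⟩ := ht'mem _ h1
      obtain ⟨u2, _, rfl⟩ := Finset.mem_map.mp h2
      trivial
    · exact ht'cl h1 h2 hpq
  have hU9 : 9 ≤ U.card := by omega
  -- apply R(3,4) ≤ 9 to U with the coloring induced by c
  refine R34 (fun p q => c s(p, q)) (fun p q => show c s(p,q) = c s(q,p) by rw [Sym2.eq_swap]) rk rk_inj U hU9 ?_ ?_
  · rintro ⟨x, hx, y, hy, z, hz, hxy, hxz, hyz, cxy, cxz, cyz⟩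
    exact hblue ⟨{x, y, z}, mono3 G c 0
      (hUcl (Finset.mem_coe.mpr hx) (Finset.mem_coe.mpr hy) hxy)
      (hUcl (Finset.mem_coe.mpr hx) (Finset.mem_coe.mpr hz) hxz)
      (hUcl (Finset.mem_coe.mpr hy) (Finset.mem_coe.mpr hz) hyz) cxy cxz cyz⟩
  · rintro ⟨w, hw, x, hx, y, hy, z, hz, hwx, hwy, hwz, hxy, hxz, hyz,
      cwx, cwy, cwz, cxy, cxz, cyz⟩
    obtain ⟨aw, cw, nw⟩ := hUmem w hw
    obtain ⟨ax, cx, nx⟩ := hUmem x hx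
    obtain ⟨ay, cy, ny⟩ := hUmem y hy
    obtain ⟨az, cz, nz⟩ := hUmem z hz
    have awx := hUcl (Finset.mem_coe.mpr hw) (Finset.mem_coe.mpr hx) hwx
    have awy := hUcl (Finset.mem_coe.mpr hw) (Finset.mem_coe.mpr hy) hwy
    have awz := hUcl (Finset.mem_coe.mpr hw) (Finset.mem_coe.mpr hz) hwz
    have axy := hUcl (Finset.mem_coe.mpr hx) (Finset.mem_coe.mpr hy) hxy
    have axz := hUcl (Finset.mem_coe.mpr hx) (Finset.mem_coe.mpr hz) hxz
    have ayz := hUcl (Finset.mem_coe.mpr hy) (Finset.mem_coe.mpr hz) hyz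
    set Y : Finset (Fin 8 ⊕ ZMod 13) := {Sum.inl v, w, x, y, z} with hY
    have hYcl : G.IsClique ↑Y := by
      intro p hp q hq hpq
      simp only [hY, Finset.coe_insert, Set.mem_insert_iff, Finset.coe_singleton,
        Set.mem_singleton_iff] at hp hq
      rcases hp with rfl | rfl | rfl | rfl | rfl <;>
        rcases hq with rfl | rfl | rfl | rfl | rfl <;>
        first
          | exact absurd rfl hpq
          | assumption
          | exact SimpleGraph.Adj.symm (by assumption)
    have hYcol : ∀ p ∈ Y, ∀ q ∈ Y, p ≠ q → c s(p, q) = 1 := by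
      intro p hp q hq hpq
      simp only [hY, Finset.mem_insert, Finset.mem_singleton] at hp hq
      rcases hp with rfl | rfl | rfl | rfl | rfl <;>
        rcases hq with rfl | rfl | rfl | rfl | rfl <;>
        first
          | exact absurd rfl hpq
          | assumption
          | (rw [Sym2.eq_swap]; assumption)
    have hYcard : Y.card = 5 := by
      rw [hY]
      rw [Finset.card_insert_of_notMem (by
        simp only [Finset.mem_insert, Finset.mem_singleton]
        push_neg
        exact ⟨Ne.symm nw, Ne.symm nx, Ne.symm ny, Ne.symm nz⟩)]
      rw [Finset.card_insert_of_notMem (by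
        simp only [Finset.mem_insert, Finset.mem_singleton]
        push_neg
        exact ⟨hwx, hwy, hwz⟩)]
      rw [Finset.card_insert_of_notMem (by
        simp only [Finset.mem_insert, Finset.mem_singleton]
        push_neg
        exact ⟨hxy, hxz⟩)]
      rw [Finset.card_insert_of_notMem (by simpa using hyz), Finset.card_singleton]
    exact hred ⟨Y, ⟨hYcl, hYcard⟩, hYcol⟩
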